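/- Let n ≥ 0 be an integer and let f be a polynomial with complex coefficients of degree at most n+1. Then for all complex numbers x, y, z with y ≠ z, y ∉ {0, -1, ..., -n}, and z ∉ {0, -1, ..., -n}, one has ∑_{k=0}^{n} C(n,k) (-1)^k f(x-k)/((y+k)(z+k)) = (n!/(z-y)) · ( f(x+y)/(y(y+1)⋯(y+n)) − f(x+z)/(z(z+1)⋯(z+n)) ). -/

import Mathlib

open Finset Nat

lemma melzakA : ∀ (N : ℕ) (Y : ℂ), (∀ k ∈ Finset.range (N+1), Y + k ≠ 0) →
    ∑ k ∈ Finset.range (N+1), (N.choose k : ℂ) * (-1)^k / (Y + k)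
      = (N ! : ℂ) / ∏ j ∈ Finset.range (N+1), (Y + j) := by
  intro N
  induction N with
  | zero => intro Y hY; simp
  | succ N ih =>
    intro Y hY
    have hY0 : Y ≠ 0 := by simpa using hY 0 (by simp)
    have hYk : ∀ k ∈ Finset.range (N+1), Y + k ≠ 0 := fun k hk => by
      refine hY k ?_; simp at hk ⊢; omega
    have hY1k : ∀ k ∈ Finset.range (N+1), (Y+1) + k ≠ 0 := by
      intro k hk
      have := hY (k+1) (by simp at hk ⊢; omega)
      push_cast at this ⊢
      intro h; apply this; linear_combination h
    have hS : ∑ k ∈ Finset.range (N+1+1), ((N+1).choose k : ℂ) * (-1)^k / (Y + k)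
        = (∑ k ∈ Finset.range (N+1), (N.choose k : ℂ) * (-1)^k / (Y + k))
          - ∑ k ∈ Finset.range (N+1), (N.choose k : ℂ) * (-1)^k / ((Y+1) + k) := by
      have hA2 : ∑ k ∈ Finset.range (N+1), (N.choose (k+1) : ℂ) * (-1)^(k+1) / (Y + (k+1 : ℕ))
          = (∑ k ∈ Finset.range (N+1), (N.choose k : ℂ) * (-1)^k / (Y + k)) - 1/Y := by
        have h1 : ∑ k ∈ Finset.range (N+1+1), (N.choose k : ℂ) * (-1)^k / (Y + k)
            = ∑ k ∈ Finset.range (N+1), (N.choose (k+1) : ℂ) * (-1)^(k+1) / (Y + (k+1:ℕ)) + 1/Y := by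
          rw [Finset.sum_range_succ']; norm_num
        have h2 : ∑ k ∈ Finset.range (N+1+1), (N.choose k : ℂ) * (-1)^k / (Y + k)
            = ∑ k ∈ Finset.range (N+1), (N.choose k : ℂ) * (-1)^k / (Y + k) := by
          rw [Finset.sum_range_succ]; simp
        rw [← h2, h1]; ring
      rw [Finset.sum_range_succ']
      have : ∀ k ∈ Finset.range (N+1), ((N+1).choose (k+1) : ℂ) * (-1)^(k+1) / (Y + (k+1:ℕ))
          = (N.choose k : ℂ) * (-1)^(k+1) / (Y + (k+1:ℕ))
            + (N.choose (k+1) : ℂ) * (-1)^(k+1) / (Y + (k+1:ℕ)) := by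
        intro k hk
        rw [Nat.choose_succ_succ]
        push_cast
        ring
      rw [Finset.sum_congr rfl this, Finset.sum_add_distrib, hA2]
      have h3 : ∑ k ∈ Finset.range (N+1), (N.choose k : ℂ) * (-1)^(k+1) / (Y + (k+1:ℕ))
          = - ∑ k ∈ Finset.range (N+1), (N.choose k : ℂ) * (-1)^k / ((Y+1) + k) := by
        rw [← Finset.sum_neg_distrib]
        refine Finset.sum_congr rfl fun k hk => ?_
        push_cast
        ring_nf
      rw [h3]
      simp only [Nat.choose_zero_right, Nat.cast_one, Nat.cast_zero, add_zero, pow_zero,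
        one_mul, mul_one]
      ring
    rw [hS, ih Y hYk, ih (Y+1) hY1k]
    set P := ∏ j ∈ Finset.range (N+1), (Y + (j:ℂ)) with hPdef
    set Q := ∏ j ∈ Finset.range (N+1), ((Y+1) + (j:ℂ)) with hQdef
    have hp : P ≠ 0 := Finset.prod_ne_zero_iff.mpr fun j hj => hYk j hj
    have hq : Q ≠ 0 := Finset.prod_ne_zero_iff.mpr hY1k
    have hprod : ∏ j ∈ Finset.range (N+1), (Y + ((j:ℂ)+1)) = Q := by
      rw [hQdef]; exact Finset.prod_congr rfl fun j _ => by ring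
    have hfull : P * (Y + ((N:ℂ)+1)) = Y * Q := by
      have h1 : (∏ j ∈ Finset.range (N+1+1), (Y + (j:ℂ))) = P * (Y + ((N:ℂ)+1)) := by
        rw [Finset.prod_range_succ]; push_cast; rfl
      have h2 : (∏ j ∈ Finset.range (N+1+1), (Y + (j:ℂ))) = Y * Q := by
        rw [Finset.prod_range_succ']
        push_cast
        rw [hprod]
        ring
      rw [← h1, h2]
    have hYN : Y + ((N:ℂ)+1) ≠ 0 := by
      have := hY (N+1) (by simp)
      push_cast at this; exact this
    have hlast : (∏ j ∈ Finset.range (N+1+1), (Y + (j:ℂ))) = P * (Y + ((N:ℂ)+1)) := by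
      rw [Finset.prod_range_succ]; push_cast; rfl
    rw [hlast]
    have hfact : (((N+1)) ! : ℂ) = ((N:ℂ)+1) * (N ! : ℂ) := by
      rw [Nat.factorial_succ]; push_cast; ring
    rw [hfact]
    rw [div_sub_div _ _ hp hq, div_eq_div_iff (mul_ne_zero hp hq) (mul_ne_zero hp hYN)]
    linear_combination (-(N ! : ℂ) * P) * hfull
lemma melzakB (N : ℕ) (Y Z : ℂ) (hYZ : Y ≠ Z)
    (hY : ∀ k ∈ Finset.range (N+1), Y + k ≠ 0)
    (hZ : ∀ k ∈ Finset.range (N+1), Z + k ≠ 0) :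
    ∑ k ∈ Finset.range (N+1), (N.choose k : ℂ) * (-1)^k / ((Y + k) * (Z + k))
      = (N ! : ℂ) / (Z - Y) * (1 / (∏ j ∈ Finset.range (N+1), (Y + j))
          - 1 / ∏ j ∈ Finset.range (N+1), (Z + j)) := by
  have hZY : Z - Y ≠ 0 := sub_ne_zero.mpr (Ne.symm hYZ)
  have hsplit : ∀ k ∈ Finset.range (N+1),
      (N.choose k : ℂ) * (-1)^k / ((Y + k) * (Z + k))
        = 1/(Z-Y) * ((N.choose k : ℂ) * (-1)^k / (Y + k) - (N.choose k : ℂ) * (-1)^k / (Z + k)) := by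
    intro k hk
    have h1 := hY k hk
    have h2 := hZ k hk
    field_simp
    ring
  rw [Finset.sum_congr rfl hsplit, ← Finset.mul_sum, Finset.sum_sub_distrib,
    melzakA N Y hY, melzakA N Z hZ]
  have hp : (∏ j ∈ Finset.range (N+1), (Y + (j:ℂ))) ≠ 0 := Finset.prod_ne_zero_iff.mpr hY
  have hq : (∏ j ∈ Finset.range (N+1), (Z + (j:ℂ))) ≠ 0 := Finset.prod_ne_zero_iff.mpr hZ
  field_simp

lemma keyNat (n m i : ℕ) (h : m + i ≤ n) :
    n.choose (m+i) * (m+i).descFactorial m = n.descFactorial m * (n-m).choose i := by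
  have hc := Nat.choose_mul (n := n) (k := m+i) (s := m) (Nat.le_add_right m i)
  rw [Nat.add_sub_cancel_left] at hc
  rw [Nat.descFactorial_eq_factorial_mul_choose, Nat.descFactorial_eq_factorial_mul_choose]
  calc n.choose (m+i) * (m ! * (m+i).choose m)
      = m ! * (n.choose (m+i) * (m+i).choose m) := by ring
    _ = m ! * (n.choose m * (n-m).choose i) := by rw [hc]
    _ = m ! * n.choose m * (n-m).choose i := by ring

lemma descProd (m : ℕ) : ∀ k : ℕ, m ≤ k →
    (∏ j ∈ Finset.range m, (-(k:ℂ) + j)) = (-1)^m * (k.descFactorial m : ℂ) := by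
  induction m with
  | zero => intro k _; simp
  | succ m ih =>
    intro k hk
    rw [Finset.prod_range_succ, ih k (le_of_lt hk)]  -- hk : m+1 ≤ k
    rw [Nat.descFactorial_succ]
    have hmk : (((k - m : ℕ)) : ℂ) = (k:ℂ) - m := by
      have : m ≤ k := le_of_lt hk
      push_cast [this]; ring
    push_cast [hmk]
    ring
lemma melzakBasis (n : ℕ) (y z : ℂ) (hyz : y ≠ z)
    (hy : ∀ k ∈ Finset.range (n + 1), y + k ≠ 0)
    (hz : ∀ k ∈ Finset.range (n + 1), z + k ≠ 0) (m : ℕ) (hm : m ≤ n + 1) :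
    ∑ k ∈ Finset.range (n + 1),
        (n.choose k : ℂ) * (-1)^k * (∏ j ∈ Finset.range m, (-(k:ℂ) + j)) / ((y + k) * (z + k))
      = (n ! : ℂ) / (z - y) *
        ((∏ j ∈ Finset.range m, (y + j)) / (∏ j ∈ Finset.range (n + 1), (y + j))
          - (∏ j ∈ Finset.range m, (z + j)) / ∏ j ∈ Finset.range (n + 1), (z + j)) := by
  have hPy : (∏ j ∈ Finset.range (n+1), (y + (j:ℂ))) ≠ 0 := Finset.prod_ne_zero_iff.mpr hy
  have hPz : (∏ j ∈ Finset.range (n+1), (z + (j:ℂ))) ≠ 0 := Finset.prod_ne_zero_iff.mpr hz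
  rcases eq_or_lt_of_le hm with rfl | hmn
  · -- m = n + 1 : all summands vanish, RHS is 1 - 1 = 0
    have hL : ∀ k ∈ Finset.range (n+1),
        (n.choose k : ℂ) * (-1)^k * (∏ j ∈ Finset.range (n+1), (-(k:ℂ) + j)) / ((y + k) * (z + k)) = 0 := by
      intro k hk
      have : (∏ j ∈ Finset.range (n+1), (-(k:ℂ) + j)) = 0 :=
        Finset.prod_eq_zero hk (by simp)
      rw [this, mul_zero, zero_div]
    rw [Finset.sum_congr rfl hL, Finset.sum_const, smul_zero,
      div_self hPy, div_self hPz]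
    ring
  · -- m ≤ n
    have hmn' : m ≤ n := Nat.lt_succ_iff.mp hmn
    set r := n - m with hr
    have hnm : n + 1 = m + (r + 1) := by omega
    have hsum_split := Finset.sum_range_add (fun k =>
      (n.choose k : ℂ) * (-1)^k * (∏ j ∈ Finset.range m, (-(k:ℂ) + j)) / ((y + k) * (z + k))) m (r+1)
    have hy_split := Finset.prod_range_add (fun j => y + (j:ℂ)) m (r+1)
    have hz_split := Finset.prod_range_add (fun j => z + (j:ℂ)) m (r+1)
    rw [hnm, hsum_split, hy_split, hz_split]
    -- first block of the sum vanishes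
    have h0 : ∀ k ∈ Finset.range m,
        (n.choose k : ℂ) * (-1)^k * (∏ j ∈ Finset.range m, (-(k:ℂ) + j)) / ((y + k) * (z + k)) = 0 := by
      intro k hk
      have : (∏ j ∈ Finset.range m, (-(k:ℂ) + j)) = 0 :=
        Finset.prod_eq_zero hk (by simp)
      rw [this, mul_zero, zero_div]
    rw [Finset.sum_congr rfl h0, Finset.sum_const, smul_zero, zero_add]
    set D : ℂ := (n.descFactorial m : ℂ) with hD
    have hsign : ∀ i : ℕ, ((-1:ℂ))^(m+i) * (-1)^m = (-1)^i := by
      intro i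
      have h1 : ((-1:ℂ))^m * (-1)^m = 1 := by
        rw [← pow_add, ← two_mul, pow_mul]; norm_num
      calc ((-1:ℂ))^(m+i) * (-1)^m = ((-1:ℂ)^m * (-1)^m) * (-1)^i := by rw [pow_add]; ring
        _ = (-1)^i := by rw [h1, one_mul]
    have hterm : ∀ i ∈ Finset.range (r+1),
        (n.choose (m+i) : ℂ) * (-1)^(m+i) * (∏ j ∈ Finset.range m, (-(((m+i:ℕ)):ℂ) + j))
            / ((y + ((m+i:ℕ):ℂ)) * (z + ((m+i:ℕ):ℂ)))
          = D * ((r.choose i : ℂ) * (-1)^i / (((y + m) + i) * ((z + m) + i))) := by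
      intro i hi
      have him : m + i ≤ n := by
        simp only [Finset.mem_range] at hi; omega
      rw [descProd m (m+i) (Nat.le_add_right m i)]
      have hkC : (n.choose (m+i) : ℂ) * ((m+i).descFactorial m : ℂ)
          = D * (r.choose i : ℂ) := by
        have := congrArg (Nat.cast : ℕ → ℂ) (keyNat n m i him)
        push_cast at this
        rw [hD]; push_cast
        linear_combination this
      have hnum : (n.choose (m+i) : ℂ) * (-1)^(m+i) * ((-1)^m * ((m+i).descFactorial m : ℂ))
          = D * ((r.choose i : ℂ) * (-1)^i) := by
        calc (n.choose (m+i) : ℂ) * (-1)^(m+i) * ((-1)^m * ((m+i).descFactorial m : ℂ))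
            = ((n.choose (m+i) : ℂ) * ((m+i).descFactorial m : ℂ)) * ((-1)^(m+i) * (-1)^m) := by ring
          _ = (D * (r.choose i : ℂ)) * ((-1)^i) := by rw [hkC, hsign i]
          _ = D * ((r.choose i : ℂ) * (-1)^i) := by ring
      have hden : (y + ((m+i:ℕ):ℂ)) * (z + ((m+i:ℕ):ℂ)) = ((y + m) + i) * ((z + m) + i) := by
        push_cast; ring
      rw [hnum, hden, mul_div_assoc]
    rw [Finset.sum_congr rfl hterm, ← Finset.mul_sum]
    -- apply melzakB with Y = y + m, Z = z + m
    have hYZ' : y + (m:ℂ) ≠ z + m := by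
      intro h; exact hyz (by linear_combination h)
    have hY' : ∀ i ∈ Finset.range (r+1), (y + (m:ℂ)) + i ≠ 0 := by
      intro i hi
      have him : m + i < n + 1 := by simp only [Finset.mem_range] at hi; omega
      have := hy (m+i) (Finset.mem_range.mpr him)
      push_cast at this
      intro h; exact this (by linear_combination h)
    have hZ' : ∀ i ∈ Finset.range (r+1), (z + (m:ℂ)) + i ≠ 0 := by
      intro i hi
      have him : m + i < n + 1 := by simp only [Finset.mem_range] at hi; omega
      have := hz (m+i) (Finset.mem_range.mpr him)
      push_cast at this
      intro h; exact this (by linear_combination h)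
    rw [melzakB r (y + m) (z + m) hYZ' hY' hZ']
    -- now pure algebra
    have hQy : (∏ j ∈ Finset.range m, (y + (j:ℂ))) ≠ 0 :=
      Finset.prod_ne_zero_iff.mpr fun j hj => hy j (by simp at hj ⊢; omega)
    have hQz : (∏ j ∈ Finset.range m, (z + (j:ℂ))) ≠ 0 :=
      Finset.prod_ne_zero_iff.mpr fun j hj => hz j (by simp at hj ⊢; omega)
    have hPy' : (∏ i ∈ Finset.range (r+1), ((y + (m:ℂ)) + i)) ≠ 0 :=
      Finset.prod_ne_zero_iff.mpr hY'
    have hPz' : (∏ i ∈ Finset.range (r+1), ((z + (m:ℂ)) + i)) ≠ 0 :=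
      Finset.prod_ne_zero_iff.mpr hZ'
    have hcy : ∏ i ∈ Finset.range (r+1), (y + ((m+i:ℕ):ℂ)) = ∏ i ∈ Finset.range (r+1), ((y + m) + i) :=
      Finset.prod_congr rfl fun i _ => by push_cast; ring
    have hcz : ∏ i ∈ Finset.range (r+1), (z + ((m+i:ℕ):ℂ)) = ∏ i ∈ Finset.range (r+1), ((z + m) + i) :=
      Finset.prod_congr rfl fun i _ => by push_cast; ring
    rw [hcy, hcz]
    have hfac : D * (r ! : ℂ) = (n ! : ℂ) := by
      rw [hD]
      have := congrArg (Nat.cast : ℕ → ℂ) (Nat.factorial_mul_descFactorial hmn')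
      push_cast at this
      rw [hr]
      linear_combination this
    have hzy : z - y ≠ 0 := sub_ne_zero.mpr (Ne.symm hyz)
    have hsub : z + (m:ℂ) - (y + m) = z - y := by ring
    rw [hsub, div_mul_cancel_left₀ hQy, div_mul_cancel_left₀ hQz, ← hfac]
    ring
noncomputable def melQ (m : ℕ) : Polynomial ℂ :=
  ∏ j ∈ Finset.range m, (Polynomial.X + Polynomial.C (j:ℂ))

lemma melQ_eval (m : ℕ) (t : ℂ) : (melQ m).eval t = ∏ j ∈ Finset.range m, (t + j) := by
  simp [melQ, Polynomial.eval_prod]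

lemma melQ_monic (m : ℕ) : (melQ m).Monic :=
  Polynomial.monic_prod_of_monic _ _ fun j _ => Polynomial.monic_X_add_C _

lemma melQ_natDegree (m : ℕ) : (melQ m).natDegree = m := by
  rw [melQ, Polynomial.natDegree_prod_of_monic _ _ fun j _ => Polynomial.monic_X_add_C _]
  rw [Finset.sum_congr rfl fun j (_ : j ∈ Finset.range m) => Polynomial.natDegree_X_add_C (j:ℂ),
    Finset.sum_const, smul_eq_mul, mul_one, Finset.card_range]

lemma melzakSpan (n : ℕ) (y z : ℂ) (hyz : y ≠ z)
    (hy : ∀ k ∈ Finset.range (n + 1), y + k ≠ 0)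
    (hz : ∀ k ∈ Finset.range (n + 1), z + k ≠ 0) :
    ∀ d : ℕ, d ≤ n + 1 → ∀ F : Polynomial ℂ, F.natDegree ≤ d →
    ∑ k ∈ Finset.range (n+1), (n.choose k : ℂ) * (-1)^k * F.eval (-(k:ℂ)) / ((y+k)*(z+k))
      = (n ! : ℂ)/(z-y) * (F.eval y / (∏ j ∈ Finset.range (n+1), (y+j))
          - F.eval z / ∏ j ∈ Finset.range (n+1), (z+j)) := by
  intro d
  induction d with
  | zero =>
    intro _ F hF
    obtain ⟨c, rfl⟩ : ∃ c, F = Polynomial.C c :=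
      ⟨F.coeff 0, Polynomial.eq_C_of_natDegree_le_zero hF⟩
    have hQ := melzakBasis n y z hyz hy hz 0 (by omega)
    simp only [Finset.prod_range_zero] at hQ
    simp only [Polynomial.eval_C]
    have h1 : ∀ k ∈ Finset.range (n+1), (n.choose k : ℂ) * (-1)^k * c / ((y+k)*(z+k))
        = c * ((n.choose k : ℂ) * (-1)^k * 1 / ((y+k)*(z+k))) := fun k _ => by ring
    rw [Finset.sum_congr rfl h1, ← Finset.mul_sum, hQ]
    ring
  | succ d ih =>
    intro hd F hF
    set c := F.coeff (d+1) with hc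
    set G := F - Polynomial.C c * melQ (d+1) with hGdef
    have hQmonic := melQ_monic (d+1)
    have hQdeg := melQ_natDegree (d+1)
    have hG : G.natDegree ≤ d := by
      rw [Polynomial.natDegree_le_iff_coeff_eq_zero]
      intro N hN
      rw [hGdef, Polynomial.coeff_sub, Polynomial.coeff_C_mul]
      rcases eq_or_lt_of_le (Nat.succ_le_of_lt hN) with h | h
      · -- N = d+1
        rw [← h]
        have : (melQ (d+1)).coeff (d+1) = 1 := by
          have := hQmonic.coeff_natDegree
          rwa [hQdeg] at this
        rw [this, mul_one, hc, sub_self]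
      · have h1 : F.coeff N = 0 := Polynomial.coeff_eq_zero_of_natDegree_lt (lt_of_le_of_lt hF h)
        have h2 : (melQ (d+1)).coeff N = 0 := Polynomial.coeff_eq_zero_of_natDegree_lt (by omega)
        rw [h1, h2, mul_zero, sub_zero]
    have hFeq : F = G + Polynomial.C c * melQ (d+1) := by rw [hGdef]; ring
    have ihG := ih (by omega) G hG
    have hQ : ∑ k ∈ Finset.range (n+1),
        (n.choose k : ℂ) * (-1)^k * (melQ (d+1)).eval (-(k:ℂ)) / ((y+k)*(z+k))
        = (n ! : ℂ)/(z-y) * ((melQ (d+1)).eval y / (∏ j ∈ Finset.range (n+1), (y+j))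
            - (melQ (d+1)).eval z / ∏ j ∈ Finset.range (n+1), (z+j)) := by
      simp only [melQ_eval]
      exact melzakBasis n y z hyz hy hz (d+1) hd
    rw [hFeq]
    simp only [Polynomial.eval_add, Polynomial.eval_mul, Polynomial.eval_C]
    have hsplit : ∀ k ∈ Finset.range (n+1),
        (n.choose k : ℂ) * (-1)^k * (G.eval (-(k:ℂ)) + c * (melQ (d+1)).eval (-(k:ℂ))) / ((y+k)*(z+k))
          = (n.choose k : ℂ) * (-1)^k * G.eval (-(k:ℂ)) / ((y+k)*(z+k))
            + c * ((n.choose k : ℂ) * (-1)^k * (melQ (d+1)).eval (-(k:ℂ)) / ((y+k)*(z+k))) :=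
      fun k _ => by ring
    rw [Finset.sum_congr rfl hsplit, Finset.sum_add_distrib, ← Finset.mul_sum, ihG, hQ]
    ring

theorem melzak_two_denominators (n : ℕ) (f : Polynomial ℂ) (hf : f.natDegree ≤ n + 1)
    (x y z : ℂ) (hyz : y ≠ z)
    (hy : ∀ k ∈ Finset.range (n + 1), y + k ≠ 0)
    (hz : ∀ k ∈ Finset.range (n + 1), z + k ≠ 0) :
    ∑ k ∈ Finset.range (n + 1),
        (n.choose k : ℂ) * (-1) ^ k * f.eval (x - k) / ((y + k) * (z + k)) =
      (n ! : ℂ) / (z - y) *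
        (f.eval (x + y) / (∏ j ∈ Finset.range (n + 1), (y + j)) -
          f.eval (x + z) / ∏ j ∈ Finset.range (n + 1), (z + j)) := by
  set F := f.comp (Polynomial.X + Polynomial.C x) with hFdef
  have hFdeg : F.natDegree ≤ n + 1 := by
    rw [hFdef, Polynomial.natDegree_comp, Polynomial.natDegree_X_add_C, mul_one]
    exact hf
  have hFeval : ∀ t : ℂ, F.eval t = f.eval (t + x) := by
    intro t
    rw [hFdef, Polynomial.eval_comp, Polynomial.eval_add, Polynomial.eval_X, Polynomial.eval_C]
  have h := melzakSpan n y z hyz hy hz (n+1) le_rfl F hFdeg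
  have e1 : ∀ k ∈ Finset.range (n+1),
      (n.choose k : ℂ) * (-1)^k * F.eval (-(k:ℂ)) / ((y+k)*(z+k))
        = (n.choose k : ℂ) * (-1)^k * f.eval (x - k) / ((y+k)*(z+k)) := by
    intro k _
    rw [hFeval]
    congr 2
    ring
  rw [Finset.sum_congr rfl e1] at h
  rw [hFeval, hFeval] at h
  rw [show y + x = x + y by ring, show z + x = x + z by ring] at h
  exact h
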